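/- There is a constant c such that for every sufficiently large integer d and every natural number n there exists a binary string x of length n with C(x) ≥ n − d and ld^bb_{d − 2⌊log₂ d⌋ − c}(x) ≥ n − d. -/

import Mathlib

/-- Bijective binary encoding of binary strings as natural numbers. -/
def strToNat : List Bool → ℕ
  | [] => 0
  | b :: t => (if b then 2 else 1) + 2 * strToNat t

/-- The partial result of running machine `M` on program `p` and auxiliary input `d`. -/
def evalS (M : Nat.Partrec.Code) (p d : List Bool) : Part ℕ :=
  M.eval (Nat.pair (strToNat p) (strToNat d))

/-- `M(p, d) = x`. -/
def outputs (M : Nat.Partrec.Code) (p d x : List Bool) : Prop :=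
  strToNat x ∈ evalS M p d

/-- `M` halts on program `p` (with empty auxiliary input). -/
def haltsOn (M : Nat.Partrec.Code) (p : List Bool) : Prop :=
  (evalS M p []).Dom

/-- The number of computation steps taken by `M` on program `p` (with empty auxiliary
input); meaningful only when `M` halts on `p`. -/
noncomputable def halttime (M : Nat.Partrec.Code) (p : List Bool) : ℕ :=
  sInf {t | (Nat.Partrec.Code.evaln t M (Nat.pair (strToNat p) 0)).isSome}

/-- `M` is a universal machine: it simulates every machine `V` via a prefix `w_V`. -/
def Universal (M : Nat.Partrec.Code) : Prop :=
  ∀ V : Nat.Partrec.Code, ∃ w : List Bool, ∀ p y : List Bool,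
    (evalS V p y).Dom → evalS M (w ++ p) y = evalS V p y

/-- Plain Kolmogorov complexity `C(x)` on machine `M`. -/
noncomputable def Cpx (M : Nat.Partrec.Code) (x : List Bool) : ℕ :=
  sInf {n | ∃ p : List Bool, p.length = n ∧ outputs M p [] x}

/-- Sophistication of `x` at (integer) significance level `c`. -/
noncomputable def soph (M : Nat.Partrec.Code) (c : ℤ) (x : List Bool) : ℕ :=
  sInf {n | ∃ p : List Bool, p.length = n ∧ (∀ d : List Bool, (evalS M p d).Dom) ∧
    ∃ d : List Bool, outputs M p d x ∧ (p.length + d.length : ℤ) ≤ (Cpx M x : ℤ) + c}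

/-- Logical depth of `x` at significance level `c`. -/
noncomputable def ld (M : Nat.Partrec.Code) (c : ℕ) (x : List Bool) : ℕ :=
  sInf {t | ∃ p : List Bool, p.length ≤ Cpx M x + c ∧ outputs M p [] x ∧ halttime M p = t}

/-- The inverse Busy Beaver function `bb(n)`. -/
noncomputable def bbInv (M : Nat.Partrec.Code) (n : ℕ) : ℕ :=
  sInf {k | ∃ p : List Bool, p.length = k ∧ haltsOn M p ∧ n ≤ halttime M p}

/-- Busy Beaver logical depth of `x` at significance `c`. -/
noncomputable def ldbb (M : Nat.Partrec.Code) (c : ℕ) (x : List Bool) : ℕ :=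
  bbInv M (ld M c x)

/-- The Busy Beaver function `BB(l)`. -/
noncomputable def BB (M : Nat.Partrec.Code) (l : ℕ) : ℕ :=
  sSup {t | ∃ p : List Bool, p.length ≤ l ∧ haltsOn M p ∧ halttime M p = t}

/-- Canonical encoding of a finite set of binary strings: the code of the sorted list
of the codes of its elements. -/
def setCode (S : Finset (List Bool)) : ℕ :=
  Encodable.encode ((S.image strToNat).sort (· ≤ ·))

/-- Kolmogorov complexity `C(S)` of a finite set of binary strings on machine `M`. -/
noncomputable def CSet (M : Nat.Partrec.Code) (S : Finset (List Bool)) : ℕ :=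
  sInf {n | ∃ p : List Bool, p.length = n ∧ setCode S ∈ evalS M p []}

/-- Conditional Kolmogorov complexity `C(x | m)` where the condition is a natural number. -/
noncomputable def CpxCondN (M : Nat.Partrec.Code) (x : List Bool) (m : ℕ) : ℕ :=
  sInf {n | ∃ p : List Bool, p.length = n ∧ strToNat x ∈ M.eval (Nat.pair (strToNat p) m)}

namespace DepthAux

open Nat.Partrec (Code)
open Nat.Partrec.Code

lemma strToNat_cons (b : Bool) (t : List Bool) :
    strToNat (b :: t) = (if b then 2 else 1) + 2 * strToNat t := rfl

lemma strToNat_append (u v : List Bool) :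
    strToNat (u ++ v) = strToNat u + 2 ^ u.length * strToNat v := by
  induction u with
  | nil => simp [strToNat]
  | cons b t ih =>
    simp only [List.cons_append, strToNat_cons, List.length_cons, pow_succ, ih]
    ring

lemma strToNat_replicate_false (k : ℕ) :
    strToNat (List.replicate k false) = 2 ^ k - 1 := by
  induction k with
  | zero => simp [strToNat]
  | succ k ih =>
    have h1 : 1 ≤ 2 ^ k := Nat.one_le_two_pow
    rw [List.replicate_succ, strToNat_cons, ih, pow_succ]
    simp; omega

lemma le_strToNat (x : List Bool) : 2 ^ x.length ≤ strToNat x + 1 := by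
  induction x with
  | nil => simp
  | cons b t ih =>
    rw [strToNat_cons, List.length_cons, pow_succ]
    cases b <;> simp <;> omega

lemma strToNat_lt (x : List Bool) : strToNat x + 1 < 2 ^ (x.length + 1) := by
  induction x with
  | nil => simp [strToNat]
  | cons b t ih =>
    rw [strToNat_cons, List.length_cons, pow_succ]
    cases b <;> simp <;> omega

lemma strToNat_pos {x : List Bool} (h : x ≠ []) : 1 ≤ strToNat x := by
  cases x with
  | nil => simp at h
  | cons b t => rw [strToNat_cons]; cases b <;> simp <;> omega

lemma exists_str (n : ℕ) : ∀ v : ℕ, 2 ^ n ≤ v + 1 → v + 1 < 2 ^ (n + 1) →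
    ∃ x : List Bool, x.length = n ∧ strToNat x = v := by
  induction n with
  | zero =>
    intro v h1 h2
    refine ⟨[], rfl, ?_⟩
    simp only [strToNat]
    omega
  | succ n ih =>
    intro v h1 h2
    have h2n : 2 ≤ 2 ^ (n + 1) := by
      have := Nat.one_le_two_pow (n := n); calc 2 = 2 * 1 := by ring
        _ ≤ 2 * 2 ^ n := by omega
        _ = 2 ^ (n + 1) := by rw [pow_succ]; ring
    have hv : 1 ≤ v := by omega
    have hp1 : (2:ℕ) ^ (n + 1) = 2 * 2 ^ n := by rw [pow_succ]; ring
    have hp2 : (2:ℕ) ^ (n + 2) = 2 * 2 ^ (n+1) := by rw [pow_succ]; ring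
    obtain ⟨t, ht, hs⟩ := ih ((v - 1) / 2) (by omega) (by omega)
    refine ⟨(decide (v % 2 = 0)) :: t, by simp [ht], ?_⟩
    rw [strToNat_cons, hs]
    rcases Nat.even_or_odd v with he | ho
    · have : v % 2 = 0 := Nat.even_iff.1 he
      simp [this]; omega
    · have : v % 2 = 1 := Nat.odd_iff.1 ho
      simp [this]; omega


lemma strToNat_drop (x : List Bool) {j : ℕ} (h : j ≤ x.length) :
    (strToNat x + 1) / 2 ^ j = strToNat (x.drop j) + 1 := by
  conv_lhs => rw [← List.take_append_drop j x]
  rw [strToNat_append]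
  have hlen : (x.take j).length = j := by
    rw [List.length_take]; omega
  rw [hlen]
  have h1 := le_strToNat (x.take j)
  have h2 := strToNat_lt (x.take j)
  rw [hlen] at h1 h2
  rw [show strToNat (x.take j) + 2 ^ j * strToNat (x.drop j) + 1
      = (strToNat (x.take j) + 1) + strToNat (x.drop j) * 2 ^ j by ring]
  rw [Nat.add_mul_div_right _ _ (Nat.pow_pos (a := 2) (n := j) (by norm_num))]
  have : (strToNat (x.take j) + 1) / 2 ^ j = 1 := by
    apply Nat.div_eq_of_lt_le
    · simpa using h1
    · rw [pow_succ] at h2; omega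
  omega

/-- the `j`-th digit test: quotient odd -/
def isOdd (a j : ℕ) : Bool := decide (((a + 1) / 2 ^ j) % 2 = 1)

/-- the end-of-string test -/
def isEnd (a j : ℕ) : Bool := decide ((a + 1) / 2 ^ j = 1)

lemma isOdd_of_head_true {x : List Bool} {j : ℕ} {z : List Bool}
    (h : x.drop j = true :: z) : isOdd (strToNat x) j = true := by
  have hj : j ≤ x.length := by
    by_contra hc
    rw [List.drop_eq_nil_of_le (by omega)] at h; simp at h
  rw [isOdd, strToNat_drop x hj, h, strToNat_cons]
  simp; omega

lemma isOdd_of_head_false {x : List Bool} {j : ℕ} {z : List Bool}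
    (h : x.drop j = false :: z) : isOdd (strToNat x) j = false := by
  have hj : j ≤ x.length := by
    by_contra hc
    rw [List.drop_eq_nil_of_le (by omega)] at h; simp at h
  rw [isOdd, strToNat_drop x hj, h, strToNat_cons]
  simp; omega

lemma isOdd_end (x : List Bool) : isOdd (strToNat x) x.length = true := by
  rw [isOdd, strToNat_drop x (le_refl _), List.drop_length]
  simp [strToNat]

lemma isEnd_end (x : List Bool) : isEnd (strToNat x) x.length = true := by
  rw [isEnd, strToNat_drop x (le_refl _), List.drop_length]
  simp [strToNat]

lemma isEnd_of_lt {x : List Bool} {j : ℕ} (h : j < x.length) :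
    isEnd (strToNat x) j = false := by
  rw [isEnd, strToNat_drop x (le_of_lt h)]
  have : x.drop j ≠ [] := by
    intro hc; rw [List.drop_eq_nil_iff] at hc; omega
  have := strToNat_pos this
  simp; omega

lemma drop_replicate_append {k j : ℕ} (h : j ≤ k) (z : List Bool) :
    (List.replicate k false ++ z).drop j = List.replicate (k - j) false ++ z := by
  rw [List.drop_append_of_le_length (by simp [h]), List.drop_replicate]

lemma rfind_eq_some {p : ℕ → Bool} {m : ℕ} (hm : p m = true)
    (hlt : ∀ k < m, p k = false) :
    Nat.rfind (fun k => Part.some (p k)) = Part.some m := by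
  apply Part.eq_some_iff.2
  apply Nat.mem_rfind.2
  constructor
  · simp [hm]
  · intro k hk; simp [hlt k hk]


lemma counting (U : Code) (n T B : ℕ) (hB : B < 2 ^ n) :
    ∃ v : ℕ, 2 ^ n ≤ v + 1 ∧ v + 1 < 2 ^ (n + 1) ∧
      ∀ b < B, Nat.Partrec.Code.evaln T U (Nat.pair b 0) ≠ some v := by
  by_contra hc
  push_neg at hc
  have hsub : Finset.Ico (2 ^ n - 1) (2 ^ (n + 1) - 1) ⊆
      (Finset.range B).image (fun b => (Nat.Partrec.Code.evaln T U (Nat.pair b 0)).getD 0) := by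
    intro v hv
    rw [Finset.mem_Ico] at hv
    have h1 : 1 ≤ 2 ^ n := Nat.one_le_two_pow
    obtain ⟨b, hb, he⟩ := hc v (by omega) (by omega)
    apply Finset.mem_image.2
    exact ⟨b, Finset.mem_range.2 hb, by rw [he]; rfl⟩
  have hcard := Finset.card_le_card hsub
  rw [Nat.card_Ico] at hcard
  have hcard2 := Finset.card_image_le (s := Finset.range B)
    (f := fun b => (Nat.Partrec.Code.evaln T U (Nat.pair b 0)).getD 0)
  rw [Finset.card_range] at hcard2
  have h1 : 1 ≤ 2 ^ n := Nat.one_le_two_pow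
  have h2 : (2:ℕ) ^ (n+1) = 2 * 2 ^ n := by rw [pow_succ]; ring
  omega

lemma haltsOn_iff (U : Code) (p : List Bool) :
    haltsOn U p ↔ ∃ t, (Nat.Partrec.Code.evaln t U (Nat.pair (strToNat p) 0)).isSome := by
  constructor
  · intro h
    obtain ⟨y, hy⟩ := Part.dom_iff_mem.1 h
    have : y ∈ U.eval (Nat.pair (strToNat p) 0) := by
      simpa [evalS, strToNat] using hy
    obtain ⟨t, ht⟩ := Nat.Partrec.Code.evaln_complete.1 this
    exact ⟨t, by rw [ht]; rfl⟩
  · rintro ⟨t, ht⟩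
    rw [Option.isSome_iff_exists] at ht
    obtain ⟨y, hy⟩ := ht
    have := Nat.Partrec.Code.evaln_sound (Option.mem_def.2 hy)
    rw [haltsOn, Part.dom_iff_mem]
    exact ⟨y, by simpa [evalS, strToNat] using this⟩

lemma halttime_isSome {U : Code} {p : List Bool} (h : haltsOn U p) :
    (Nat.Partrec.Code.evaln (halttime U p) U (Nat.pair (strToNat p) 0)).isSome := by
  have hne : {t | (Nat.Partrec.Code.evaln t U (Nat.pair (strToNat p) 0)).isSome}.Nonempty := by
    obtain ⟨t, ht⟩ := (haltsOn_iff U p).1 h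
    exact ⟨t, ht⟩
  exact Nat.sInf_mem hne

lemma halttime_min {U : Code} {p : List Bool} {t : ℕ} (h : t < halttime U p) :
    (Nat.Partrec.Code.evaln t U (Nat.pair (strToNat p) 0)).isSome = false := by
  by_contra hc
  have : t ∈ {t | (Nat.Partrec.Code.evaln t U (Nat.pair (strToNat p) 0)).isSome} := by
    simp only [Set.mem_setOf_eq]
    revert hc
    cases (Nat.Partrec.Code.evaln t U (Nat.pair (strToNat p) 0)).isSome <;> simp
  have := Nat.sInf_le this
  rw [halttime] at h
  omega

lemma evaln_at_halttime {U : Code} {p x : List Bool} (h : outputs U p [] x) :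
    Nat.Partrec.Code.evaln (halttime U p) U (Nat.pair (strToNat p) 0) = some (strToNat x) := by
  have hdom : haltsOn U p := Part.dom_iff_mem.2 ⟨_, h⟩
  have hs := halttime_isSome hdom
  rw [Option.isSome_iff_exists] at hs
  obtain ⟨y, hy⟩ := hs
  have hsound := Nat.Partrec.Code.evaln_sound (Option.mem_def.2 hy)
  have hx : strToNat x ∈ U.eval (Nat.pair (strToNat p) 0) := by
    simpa [outputs, evalS, strToNat] using h
  have : y = strToNat x := Part.mem_unique hsound hx
  rw [hy, this]

lemma output_within {U : Code} {p x : List Bool} {T : ℕ} (h : outputs U p [] x)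
    (hT : halttime U p ≤ T) :
    Nat.Partrec.Code.evaln T U (Nat.pair (strToNat p) 0) = some (strToNat x) :=
  Nat.Partrec.Code.evaln_mono hT (evaln_at_halttime h)


/-! ### The machine -/

def arr (a i : ℕ) : ℕ := (a + 1) / 2 ^ (2 * i + 1) - 1
def dNum (a i : ℕ) : ℕ := ((a + 1) / 2 ^ (i + 1)) % 2 ^ i + 2 ^ i - 1
def nn (a L i : ℕ) : ℕ := dNum a i + (L - (2 * i + 1))
def mq (a i j : ℕ) : ℕ := (arr a i + 1) / 2 ^ (j + 1) - 1
def tCond (U : Code) (a i j t : ℕ) : Bool :=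
  isEnd (arr a i) j || (Nat.Partrec.Code.evaln t U (Nat.pair (mq a i j) 0)).isSome
def hitB (U : Code) (N T b v : ℕ) : Bool :=
  decide (2 ^ (N - 2) - 1 ≤ b) || decide (Nat.Partrec.Code.evaln T U (Nat.pair b 0) = some v)
def goodB (N r v : ℕ) : Bool := decide (r = 2 ^ (N - 2) - 1) && decide (2 ^ N ≤ v + 1)

def g1 : ℕ →. ℕ × ℕ :=
  fun a => (Nat.rfind fun j => Part.some (isEnd a j)).map fun L => (a, L)
def g2 : ℕ × ℕ →. (ℕ × ℕ) × ℕ :=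
  fun s => (Nat.rfind fun j => Part.some (isOdd s.1 j)).map fun i => (s, i)
def g3 : (ℕ × ℕ) × ℕ →. ((ℕ × ℕ) × ℕ) × ℕ :=
  fun s => (Nat.rfind fun k => Part.some (isOdd (arr s.1.1 s.2) k)).map fun j => (s, j)
def g4 (U : Code) : ((ℕ × ℕ) × ℕ) × ℕ →. ℕ × ℕ :=
  fun s => (Nat.rfind fun t => Part.some (tCond U s.1.1.1 s.1.2 s.2 t)).map
    fun T => (nn s.1.1.1 s.1.1.2 s.1.2, T)
def g5 (U : Code) : ℕ × ℕ →. ℕ :=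
  fun s => Nat.rfind fun v =>
    (Nat.rfind fun b => Part.some (hitB U s.1 s.2 b v)).map fun r => goodB s.1 r v

def gFun (U : Code) : ℕ →. ℕ :=
  fun inp => (((((g1 inp.unpair.1).bind g2).bind g3).bind (g4 U)).bind (g5 U))

/-! ### Primitive recursiveness of the pieces -/

lemma Primrec.bor {α : Type*} [Primcodable α] {f g : α → Bool}
    (hf : Primrec f) (hg : Primrec g) : Primrec fun a => f a || g a :=
  (Primrec.cond hf (Primrec.const true) hg).of_eq fun a => by cases h : f a <;> simp [h]

lemma primrec_pow : Primrec₂ (fun a b : ℕ => a ^ b) := Primrec₂.unpaired'.1 Nat.Primrec.pow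

lemma primrec_isOdd : Primrec₂ isOdd := by
  unfold isOdd
  exact PrimrecPred.decide <| Primrec.eq.comp
    ((Primrec.nat_mod).comp
      ((Primrec.nat_div).comp (Primrec.succ.comp Primrec.fst)
        (primrec_pow.comp (Primrec.const 2) Primrec.snd))
      (Primrec.const 2)) (Primrec.const 1)

lemma primrec_isEnd : Primrec₂ isEnd := by
  unfold isEnd
  exact PrimrecPred.decide <| Primrec.eq.comp
    ((Primrec.nat_div).comp (Primrec.succ.comp Primrec.fst)
      (primrec_pow.comp (Primrec.const 2) Primrec.snd)) (Primrec.const 1)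

lemma primrec_arr : Primrec₂ arr := by
  unfold arr
  exact Primrec.nat_sub.comp
    ((Primrec.nat_div).comp (Primrec.succ.comp Primrec.fst)
      (primrec_pow.comp (Primrec.const 2)
        (Primrec.succ.comp (Primrec.nat_double.comp Primrec.snd))))
    (Primrec.const 1)

lemma primrec_dNum : Primrec₂ dNum := by
  unfold dNum
  exact Primrec.nat_sub.comp
    (Primrec.nat_add.comp
      (Primrec.nat_mod.comp
        (Primrec.nat_div.comp (Primrec.succ.comp Primrec.fst)
          (primrec_pow.comp (Primrec.const 2) (Primrec.succ.comp Primrec.snd)))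
        (primrec_pow.comp (Primrec.const 2) Primrec.snd))
      (primrec_pow.comp (Primrec.const 2) Primrec.snd))
    (Primrec.const 1)

lemma primrec_nn : Primrec (fun x : (ℕ × ℕ) × ℕ => nn x.1.1 x.1.2 x.2) := by
  unfold nn
  exact Primrec.nat_add.comp
    (primrec_dNum.comp (Primrec.fst.comp Primrec.fst) Primrec.snd)
    (Primrec.nat_sub.comp (Primrec.snd.comp Primrec.fst)
      (Primrec.succ.comp (Primrec.nat_double.comp Primrec.snd)))

lemma primrec_mq : Primrec (fun x : (ℕ × ℕ) × ℕ => mq x.1.1 x.1.2 x.2) := by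
  unfold mq
  exact Primrec.nat_sub.comp
    (Primrec.nat_div.comp
      (Primrec.succ.comp (primrec_arr.comp (Primrec.fst.comp Primrec.fst)
        (Primrec.snd.comp Primrec.fst)))
      (primrec_pow.comp (Primrec.const 2) (Primrec.succ.comp Primrec.snd)))
    (Primrec.const 1)

lemma primrec_tCond (U : Code) :
    Primrec (fun x : (((ℕ × ℕ) × ℕ) × ℕ) × ℕ => tCond U x.1.1.1.1 x.1.1.2 x.1.2 x.2) := by
  unfold tCond
  have pa : Primrec (fun x : (((ℕ × ℕ) × ℕ) × ℕ) × ℕ => x.1.1.1.1) :=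
    Primrec.fst.comp (Primrec.fst.comp (Primrec.fst.comp Primrec.fst))
  have pi : Primrec (fun x : (((ℕ × ℕ) × ℕ) × ℕ) × ℕ => x.1.1.2) :=
    Primrec.snd.comp (Primrec.fst.comp Primrec.fst)
  have pj : Primrec (fun x : (((ℕ × ℕ) × ℕ) × ℕ) × ℕ => x.1.2) :=
    Primrec.snd.comp Primrec.fst
  apply Primrec.bor
  · exact primrec_isEnd.comp (primrec_arr.comp pa pi) pj
  · exact Primrec.option_isSome.comp
      (Nat.Partrec.Code.primrec_evaln.comp
        (Primrec.pair (Primrec.pair Primrec.snd (Primrec.const U))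
          (Primrec₂.natPair.comp
            (primrec_mq.comp (Primrec.pair (Primrec.pair pa pi) pj)) (Primrec.const 0))))

lemma primrec_hitB (U : Code) :
    Primrec (fun x : ((ℕ × ℕ) × ℕ) × ℕ => hitB U x.1.1.1 x.1.1.2 x.2 x.1.2) := by
  unfold hitB
  apply Primrec.bor
  · exact PrimrecPred.decide <| Primrec.nat_le.comp
      (Primrec.nat_sub.comp
        (primrec_pow.comp (Primrec.const 2)
          (Primrec.nat_sub.comp (Primrec.fst.comp (Primrec.fst.comp Primrec.fst))
            (Primrec.const 2)))
        (Primrec.const 1))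
      Primrec.snd
  · exact PrimrecPred.decide <| Primrec.eq.comp
      (Nat.Partrec.Code.primrec_evaln.comp
        (Primrec.pair
          (Primrec.pair (Primrec.snd.comp (Primrec.fst.comp Primrec.fst)) (Primrec.const U))
          (Primrec₂.natPair.comp Primrec.snd (Primrec.const 0))))
      (Primrec.option_some.comp (Primrec.snd.comp Primrec.fst))

lemma primrec_goodB : Primrec (fun x : ((ℕ × ℕ) × ℕ) × ℕ => goodB x.1.1.1 x.2 x.1.2) := by
  unfold goodB
  refine (Primrec.dom_bool₂ (· && ·)).comp ?_ ?_
  · exact PrimrecPred.decide <| Primrec.eq.comp Primrec.snd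
      (Primrec.nat_sub.comp
        (primrec_pow.comp (Primrec.const 2)
          (Primrec.nat_sub.comp (Primrec.fst.comp (Primrec.fst.comp Primrec.fst))
            (Primrec.const 2)))
        (Primrec.const 1))
  · exact PrimrecPred.decide <| Primrec.nat_le.comp
      (primrec_pow.comp (Primrec.const 2) (Primrec.fst.comp (Primrec.fst.comp Primrec.fst)))
      (Primrec.succ.comp (Primrec.snd.comp Primrec.fst))

/-! ### Partial recursiveness of `gFun` -/

lemma partrec₂_of_primrec {α : Type*} [Primcodable α] {f : α → ℕ → Bool}
    (hf : Primrec fun p : α × ℕ => f p.1 p.2) :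
    Partrec₂ fun (a : α) (n : ℕ) => Part.some (f a n) :=
  Computable₂.partrec₂ (α := α) (f := fun a n => f a n) hf.to_comp

lemma partrec_g1 : Partrec g1 := by
  unfold g1
  apply Partrec.map
  · exact Partrec.rfind (partrec₂_of_primrec primrec_isEnd)
  · exact (Computable.pair Computable.fst Computable.snd).to₂

lemma partrec_g2 : Partrec g2 := by
  unfold g2
  apply Partrec.map
  · apply Partrec.rfind
    exact partrec₂_of_primrec (primrec_isOdd.comp (Primrec.fst.comp Primrec.fst) Primrec.snd)
  · exact (Computable.pair Computable.fst Computable.snd).to₂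

lemma partrec_g3 : Partrec g3 := by
  unfold g3
  apply Partrec.map
  · apply Partrec.rfind
    exact partrec₂_of_primrec (primrec_isOdd.comp
      (primrec_arr.comp (Primrec.fst.comp (Primrec.fst.comp Primrec.fst))
        (Primrec.snd.comp Primrec.fst))
      Primrec.snd)
  · exact (Computable.pair Computable.fst Computable.snd).to₂

set_option maxHeartbeats 1000000 in
lemma partrec_g4 (U : Code) : Partrec (g4 U) := by
  unfold g4
  refine Partrec.map
    (f := fun s : ((ℕ × ℕ) × ℕ) × ℕ =>
      Nat.rfind fun t => Part.some (tCond U s.1.1.1 s.1.2 s.2 t))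
    (g := fun s T => (nn s.1.1.1 s.1.1.2 s.1.2, T)) ?_ ?_
  · exact Partrec.rfind (partrec₂_of_primrec (primrec_tCond U))
  · refine Primrec₂.to_comp
      (show Primrec₂ (fun (s : ((ℕ × ℕ) × ℕ) × ℕ) (T : ℕ) =>
        ((nn s.1.1.1 s.1.1.2 s.1.2, T) : ℕ × ℕ)) from ?_)
    refine Primrec.pair (primrec_nn.comp ?_) Primrec.snd
    exact Primrec.pair
      (Primrec.pair (Primrec.fst.comp (Primrec.fst.comp (Primrec.fst.comp Primrec.fst)))
        (Primrec.snd.comp (Primrec.fst.comp (Primrec.fst.comp Primrec.fst))))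
      (Primrec.snd.comp (Primrec.fst.comp Primrec.fst))

set_option maxHeartbeats 1000000 in
lemma partrec_g5 (U : Code) : Partrec (g5 U) := by
  unfold g5
  apply Partrec.rfind
  refine Partrec.map
    (f := fun s : (ℕ × ℕ) × ℕ => Nat.rfind fun b => Part.some (hitB U s.1.1 s.1.2 b s.2))
    (g := fun s r => goodB s.1.1 r s.2) ?_ ?_
  · exact Partrec.rfind (partrec₂_of_primrec (primrec_hitB U))
  · exact Primrec₂.to_comp
      (show Primrec₂ (fun (s : (ℕ × ℕ) × ℕ) (r : ℕ) => goodB s.1.1 r s.2) from primrec_goodB)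

set_option maxHeartbeats 1000000 in
lemma partrec_gFun (U : Code) : Partrec (gFun U) := by
  unfold gFun
  refine Partrec.bind (Partrec.bind (Partrec.bind (Partrec.bind ?_ ?_) ?_) ?_) ?_
  · exact partrec_g1.comp ((Primrec.fst.comp Primrec.unpair).to_comp)
  · exact partrec_g2.comp Computable.snd
  · exact partrec_g3.comp Computable.snd
  · exact (partrec_g4 U).comp Computable.snd
  · exact (partrec_g5 U).comp Computable.snd


/-! ### Evaluation of the machine on well-formed programs -/

lemma step_L (p : List Bool) :
    Nat.rfind (fun j => Part.some (isEnd (strToNat p) j)) = Part.some p.length := by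
  apply rfind_eq_some
  · exact isEnd_end p
  · intro k hk; exact isEnd_of_lt hk

lemma step_lead (x z : List Bool) (ul : ℕ)
    (hx : x = List.replicate ul false ++ true :: z) :
    Nat.rfind (fun j => Part.some (isOdd (strToNat x) j)) = Part.some ul := by
  apply rfind_eq_some
  · apply isOdd_of_head_true (z := z)
    rw [hx, drop_replicate_append (le_refl ul)]
    simp
  · intro k hk
    apply isOdd_of_head_false (z := List.replicate (ul - k - 1) false ++ true :: z)
    rw [hx, drop_replicate_append (le_of_lt hk),
      show ul - k = (ul - k - 1) + 1 by omega, List.replicate_succ]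
    simp

lemma step_lead_deg (m : ℕ) :
    Nat.rfind (fun j => Part.some (isOdd (strToNat (List.replicate m false)) j))
      = Part.some m := by
  apply rfind_eq_some
  · have := isOdd_end (List.replicate m false)
    simpa using this
  · intro k hk
    apply isOdd_of_head_false (z := List.replicate (m - k - 1) false)
    rw [List.drop_replicate, show m - k = (m - k - 1) + 1 by omega, List.replicate_succ]
    simp

lemma arr_eval (u r : List Bool) :
    arr (strToNat (List.replicate u.length false ++ true :: (u ++ r))) u.length
      = strToNat r := by
  have hsplit : List.replicate u.length false ++ true :: (u ++ r)
      = (List.replicate u.length false ++ true :: u) ++ r := by simp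
  have hlen : (List.replicate u.length false ++ true :: u).length = 2 * u.length + 1 := by
    simp; omega
  unfold arr
  rw [hsplit, strToNat_drop _ (by simp [hlen]; omega), List.drop_left' hlen]
  simp

lemma dNum_eval (u r : List Bool) :
    dNum (strToNat (List.replicate u.length false ++ true :: (u ++ r))) u.length
      = strToNat u := by
  have hsplit : List.replicate u.length false ++ true :: (u ++ r)
      = (List.replicate u.length false ++ [true]) ++ (u ++ r) := by simp
  have hlen : (List.replicate u.length false ++ [true]).length = u.length + 1 := by simp
  unfold dNum
  rw [hsplit, strToNat_drop _ (by simp), List.drop_left' hlen]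
  have h1 := le_strToNat u
  have h2 := strToNat_lt u
  rw [show strToNat (u ++ r) + 1
      = (strToNat u + 1) + (strToNat r) * 2 ^ u.length by rw [strToNat_append]; ring,
    Nat.add_mul_mod_self_right]
  have hmod : (strToNat u + 1) % 2 ^ u.length = strToNat u + 1 - 2 ^ u.length := by
    rw [Nat.mod_eq_sub_mod (by omega), Nat.mod_eq_of_lt (by rw [pow_succ] at h2; omega)]
  omega

lemma mq_eval (u q : List Bool) (k : ℕ) :
    mq (strToNat (List.replicate u.length false ++ true ::
      (u ++ (List.replicate k false ++ true :: q)))) u.length k = strToNat q := by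
  unfold mq
  rw [arr_eval]
  have hdrop : (List.replicate k false ++ true :: q).drop (k + 1) = q := by
    rw [show (k : ℕ) + 1 = (List.replicate k false ++ [true]).length by simp,
      show List.replicate k false ++ true :: q
        = (List.replicate k false ++ [true]) ++ q by simp,
      List.drop_left]
  rw [strToNat_drop _ (by simp), hdrop]
  simp

lemma outer_eval (U : Code) (N T : ℕ) (hN : 1 ≤ N) :
    ∃ v0 : ℕ, 2 ^ N ≤ v0 + 1 ∧ v0 + 1 < 2 ^ (N + 1) ∧
      (∀ b < 2 ^ (N - 2) - 1, Nat.Partrec.Code.evaln T U (Nat.pair b 0) ≠ some v0) ∧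
      (Nat.rfind fun v => (Nat.rfind fun b => Part.some (hitB U N T b v)).map
        fun r => goodB N r v) = Part.some v0 := by
  have hB : 2 ^ (N - 2) - 1 < 2 ^ N := by
    have h1 : (2:ℕ) ^ (N - 2) ≤ 2 ^ N := Nat.pow_le_pow_right (by norm_num) (by omega)
    have h2 : (1:ℕ) ≤ 2 ^ (N - 2) := Nat.one_le_two_pow
    have h3 : (2:ℕ) ^ (N - 1) < 2 ^ N := Nat.pow_lt_pow_right (by norm_num) (by omega)
    have h4 : (2:ℕ) ^ (N - 2) ≤ 2 ^ (N - 1) := Nat.pow_le_pow_right (by norm_num) (by omega)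
    omega
  obtain ⟨v, hv1, hv2, hv3⟩ := counting U N T (2 ^ (N - 2) - 1) hB
  -- the decidable "good" predicate
  let Q : ℕ → Prop := fun v =>
    (∀ b < 2 ^ (N - 2) - 1, Nat.Partrec.Code.evaln T U (Nat.pair b 0) ≠ some v) ∧
      2 ^ N ≤ v + 1
  have hQdec : DecidablePred Q := fun v => by unfold Q; infer_instance
  have hexQ : ∃ v, Q v := ⟨v, hv3, hv1⟩
  -- inner search value
  have hbf : ∀ v : ℕ, ∃ b, hitB U N T b v = true := fun v =>
    ⟨2 ^ (N - 2) - 1, by unfold hitB; simp⟩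
  -- evaluate the inner rfind
  have hinner : ∀ v : ℕ,
      (Nat.rfind fun b => Part.some (hitB U N T b v)) = Part.some (Nat.find (hbf v)) := by
    intro v
    apply rfind_eq_some
    · exact Nat.find_spec (hbf v)
    · intro b hb
      have := Nat.find_min (hbf v) hb
      exact Bool.eq_false_iff.2 this
  have hitIff : ∀ b v : ℕ, hitB U N T b v = true ↔
      (2 ^ (N - 2) - 1 ≤ b ∨ Nat.Partrec.Code.evaln T U (Nat.pair b 0) = some v) := by
    intro b v; unfold hitB; simp
  have hgood : ∀ v : ℕ, goodB N (Nat.find (hbf v)) v = true ↔ Q v := by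
    intro v
    set F := Nat.find (hbf v) with hF
    have hFspec : (2 ^ (N - 2) - 1 ≤ F ∨
        Nat.Partrec.Code.evaln T U (Nat.pair F 0) = some v) :=
      (hitIff F v).1 (Nat.find_spec (hbf v))
    have hFmin : ∀ b < F, ¬ hitB U N T b v = true := fun b hb => Nat.find_min (hbf v) hb
    have hle : F ≤ 2 ^ (N - 2) - 1 := Nat.find_min' (hbf v) ((hitIff _ _).2 (Or.inl le_rfl))
    unfold goodB
    rw [Bool.and_eq_true, decide_eq_true_iff, decide_eq_true_iff]
    constructor
    · rintro ⟨h1, h2⟩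
      refine ⟨fun b hb he => ?_, h2⟩
      exact (hFmin b (by omega)) ((hitIff b v).2 (Or.inr he))
    · rintro ⟨h1, h2⟩
      refine ⟨?_, h2⟩
      rcases Nat.lt_or_ge F (2 ^ (N - 2) - 1) with hlt | hge
      · exfalso
        rcases hFspec with hc | hc
        · omega
        · exact h1 F hlt hc
      · omega
  letI := hQdec
  refine ⟨Nat.find hexQ, ?_, ?_, ?_, ?_⟩
  · exact (Nat.find_spec hexQ).2
  · have : Nat.find hexQ ≤ v := Nat.find_min' hexQ ⟨hv3, hv1⟩
    omega
  · exact (Nat.find_spec hexQ).1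
  · have hfn : (fun v => (Nat.rfind fun b => Part.some (hitB U N T b v)).map
        fun r => goodB N r v) = fun v => Part.some (goodB N (Nat.find (hbf v)) v) := by
      funext v
      rw [hinner v, Part.map_some]
    rw [hfn]
    apply rfind_eq_some
    · exact (hgood _).2 (Nat.find_spec hexQ)
    · intro k hk
      have := Nat.find_min hexQ hk
      exact Bool.eq_false_iff.2 (fun hc => this ((hgood k).1 hc))


lemma gFun_eval_main (U : Code) (u q : List Bool) (k : ℕ) (hq : haltsOn U q) (y : ℕ) :
    ∃ v0 : ℕ,
      2 ^ (strToNat u + (k + 1 + q.length)) ≤ v0 + 1 ∧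
      v0 + 1 < 2 ^ (strToNat u + (k + 1 + q.length) + 1) ∧
      (∀ b < 2 ^ (strToNat u + (k + 1 + q.length) - 2) - 1,
        Nat.Partrec.Code.evaln (halttime U q) U (Nat.pair b 0) ≠ some v0) ∧
      gFun U (Nat.pair (strToNat (List.replicate u.length false ++ true ::
        (u ++ (List.replicate k false ++ true :: q)))) y) = Part.some v0 := by
  set r : List Bool := List.replicate k false ++ true :: q with hr
  set p : List Bool := List.replicate u.length false ++ true :: (u ++ r) with hp
  set N : ℕ := strToNat u + (k + 1 + q.length) with hN
  obtain ⟨v0, h1, h2, h3, h4⟩ := outer_eval U N (halttime U q) (by omega)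
  refine ⟨v0, h1, h2, h3, ?_⟩
  have hrlen : r.length = k + 1 + q.length := by rw [hr]; simp; omega
  have hplen : p.length = u.length + 1 + (u.length + r.length) := by rw [hp]; simp; omega
  have harr : arr (strToNat p) u.length = strToNat r := by rw [hp]; exact arr_eval u r
  have hdN : dNum (strToNat p) u.length = strToNat u := by rw [hp]; exact dNum_eval u r
  have hmq : mq (strToNat p) u.length k = strToNat q := by rw [hp, hr]; exact mq_eval u q k
  have hnn : nn (strToNat p) p.length u.length = N := by
    unfold nn
    rw [hdN, hN, hplen, hrlen]
    omega
  have e1 : g1 (strToNat p) = Part.some (strToNat p, p.length) := by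
    unfold g1
    rw [step_L, Part.map_some]
  have e2 : g2 (strToNat p, p.length) = Part.some ((strToNat p, p.length), u.length) := by
    show (Nat.rfind fun j => Part.some (isOdd (strToNat p) j)).map
      (fun i => ((strToNat p, p.length), i)) = _
    rw [step_lead p (u ++ r) u.length hp, Part.map_some]
  have e3 : g3 ((strToNat p, p.length), u.length)
      = Part.some (((strToNat p, p.length), u.length), k) := by
    show (Nat.rfind fun j => Part.some (isOdd (arr (strToNat p) u.length) j)).map
      (fun j => (((strToNat p, p.length), u.length), j)) = _
    rw [harr, step_lead r q k hr, Part.map_some]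
  have e4 : g4 U (((strToNat p, p.length), u.length), k) = Part.some (N, halttime U q) := by
    show (Nat.rfind fun t => Part.some (tCond U (strToNat p) u.length k t)).map
      (fun T => (nn (strToNat p) p.length u.length, T)) = _
    have hEnd : isEnd (strToNat r) k = false :=
      isEnd_of_lt (x := r) (by omega)
    have htC : (fun t => Part.some (tCond U (strToNat p) u.length k t))
        = fun t => Part.some
          ((Nat.Partrec.Code.evaln t U (Nat.pair (strToNat q) 0)).isSome) := by
      funext t
      unfold tCond
      rw [harr, hmq, hEnd, Bool.false_or]
    rw [htC, rfind_eq_some (halttime_isSome hq) (fun t ht => ?_), Part.map_some, hnn]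
    have := halttime_min (U := U) (p := q) ht
    exact this
  have e5 : g5 U (N, halttime U q) = Part.some v0 := by
    show (Nat.rfind fun v =>
      (Nat.rfind fun b => Part.some (hitB U N (halttime U q) b v)).map
        fun r => goodB N r v) = _
    exact h4
  unfold gFun
  rw [show (Nat.pair (strToNat p) y).unpair.1 = strToNat p by simp]
  erw [e1, Part.bind_some, e2, Part.bind_some, e3, Part.bind_some, e4, Part.bind_some, e5]

lemma gFun_eval_deg (U : Code) (u : List Bool) (m : ℕ) (hm : 1 ≤ m) (y : ℕ) :
    ∃ v0 : ℕ,
      2 ^ (strToNat u + m) ≤ v0 + 1 ∧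
      v0 + 1 < 2 ^ (strToNat u + m + 1) ∧
      (∀ b < 2 ^ (strToNat u + m - 2) - 1,
        Nat.Partrec.Code.evaln 0 U (Nat.pair b 0) ≠ some v0) ∧
      gFun U (Nat.pair (strToNat (List.replicate u.length false ++ true ::
        (u ++ List.replicate m false))) y) = Part.some v0 := by
  set r : List Bool := List.replicate m false with hr
  set p : List Bool := List.replicate u.length false ++ true :: (u ++ r) with hp
  set N : ℕ := strToNat u + m with hN
  obtain ⟨v0, h1, h2, h3, h4⟩ := outer_eval U N 0 (by omega)
  refine ⟨v0, h1, h2, h3, ?_⟩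
  have hrlen : r.length = m := by rw [hr]; simp
  have hplen : p.length = u.length + 1 + (u.length + r.length) := by rw [hp]; simp; omega
  have harr : arr (strToNat p) u.length = strToNat r := by rw [hp]; exact arr_eval u r
  have hdN : dNum (strToNat p) u.length = strToNat u := by rw [hp]; exact dNum_eval u r
  have hnn : nn (strToNat p) p.length u.length = N := by
    unfold nn
    rw [hdN, hN, hplen, hrlen]
    omega
  have e1 : g1 (strToNat p) = Part.some (strToNat p, p.length) := by
    unfold g1
    rw [step_L, Part.map_some]
  have e2 : g2 (strToNat p, p.length) = Part.some ((strToNat p, p.length), u.length) := by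
    show (Nat.rfind fun j => Part.some (isOdd (strToNat p) j)).map
      (fun i => ((strToNat p, p.length), i)) = _
    rw [step_lead p (u ++ r) u.length hp, Part.map_some]
  have e3 : g3 ((strToNat p, p.length), u.length)
      = Part.some (((strToNat p, p.length), u.length), m) := by
    show (Nat.rfind fun j => Part.some (isOdd (arr (strToNat p) u.length) j)).map
      (fun j => (((strToNat p, p.length), u.length), j)) = _
    rw [harr, hr, step_lead_deg m, Part.map_some]
  have e4 : g4 U (((strToNat p, p.length), u.length), m) = Part.some (N, 0) := by
    show (Nat.rfind fun t => Part.some (tCond U (strToNat p) u.length m t)).map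
      (fun T => (nn (strToNat p) p.length u.length, T)) = _
    have hEnd : isEnd (strToNat r) m = true := by
      have := isEnd_end r
      rw [hrlen] at this
      exact this
    have htC : (fun t => Part.some (tCond U (strToNat p) u.length m t))
        = fun t => Part.some true := by
      funext t
      unfold tCond
      rw [harr, hEnd, Bool.true_or]
    rw [htC, rfind_eq_some (m := 0) rfl (fun t ht => by omega), Part.map_some, hnn]
  have e5 : g5 U (N, 0) = Part.some v0 := by
    show (Nat.rfind fun v =>
      (Nat.rfind fun b => Part.some (hitB U N 0 b v)).map
        fun r => goodB N r v) = _
    exact h4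
  unfold gFun
  rw [show (Nat.pair (strToNat p) y).unpair.1 = strToNat p by simp]
  erw [e1, Part.bind_some, e2, Part.bind_some, e3, Part.bind_some, e4, Part.bind_some, e5]


/-! ### The key construction -/

lemma four_mul_le_two_pow {L : ℕ} (h : 4 ≤ L) : 4 * L ≤ 2 ^ L := by
  induction L with
  | zero => omega
  | succ L ih =>
    rcases Nat.lt_or_ge L 4 with h4 | h4
    · have hL3 : L = 3 := by omega
      subst hL3; norm_num
    · have h1 := ih h4
      have h2 : (16:ℕ) ≤ 2 ^ L := by
        calc (16:ℕ) = 2 ^ 4 := by norm_num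
        _ ≤ 2 ^ L := Nat.pow_le_pow_right (by norm_num) h4
      rw [pow_succ]
      omega

lemma exists_u (d : ℕ) (hd : 1 ≤ d) :
    ∃ u : List Bool, strToNat u = d ∧ u.length ≤ Nat.log 2 d + 1 := by
  obtain ⟨u, hlen, hval⟩ := exists_str (Nat.log 2 (d + 1)) d
    (by have := Nat.pow_log_le_self 2 (show d + 1 ≠ 0 by omega); omega)
    (by have := Nat.lt_pow_succ_log_self (show 1 < 2 by norm_num) (d + 1); omega)
  refine ⟨u, hval, ?_⟩
  rw [hlen]
  have h1 : Nat.log 2 (d + 1) ≤ Nat.log 2 (d * 2) :=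
    Nat.log_mono_right (by omega)
  rw [Nat.log_mul_base (by norm_num) (by omega)] at h1
  omega

lemma exists_T (U : Code) (l : ℕ) :
    (∃ q : List Bool, q.length ≤ l ∧ haltsOn U q ∧
      ∀ p : List Bool, p.length ≤ l → haltsOn U p → halttime U p ≤ halttime U q) ∨
    (∀ p : List Bool, p.length ≤ l → ¬ haltsOn U p) := by
  set S : Set (List Bool) := {p | p.length ≤ l ∧ haltsOn U p} with hS
  have hfin : S.Finite := (List.finite_length_le Bool l).subset (fun p hp => hp.1)
  by_cases hne : S.Nonempty
  · obtain ⟨q, hqS, hqmax⟩ := Set.exists_max_image S (halttime U) hfin hne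
    exact Or.inl ⟨q, hqS.1, hqS.2, fun p h1 h2 => hqmax p ⟨h1, h2⟩⟩
  · exact Or.inr (fun p h1 h2 => hne ⟨p, h1, h2⟩)

lemma key (U V : Code) (hV : V.eval = gFun U) (w : List Bool)
    (hw : ∀ p y : List Bool, (evalS V p y).Dom → evalS U (w ++ p) y = evalS V p y)
    (d n : ℕ) (hd : 2 ≤ d) (hn : d + 1 ≤ n) :
    ∃ x : List Bool, x.length = n ∧
      (∃ p0 : List Bool, p0.length ≤ w.length + 2 * Nat.log 2 d + 3 + (n - d) ∧
        outputs U p0 [] x) ∧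
      ∃ T : ℕ,
        (∀ p : List Bool, p.length + 1 ≤ n - d → haltsOn U p → halttime U p ≤ T) ∧
        (∀ p : List Bool, p.length + 3 ≤ n → outputs U p [] x → T + 1 ≤ halttime U p) := by
  obtain ⟨u, hu, hul⟩ := exists_u d (by omega)
  rcases exists_T U (n - d - 1) with ⟨q, hql, hqh, hqmax⟩ | hnone
  · -- main case
    set k : ℕ := n - d - 1 - q.length with hk
    obtain ⟨v0, hv1, hv2, hv3, hev⟩ := gFun_eval_main U u q k hqh 0
    have hNn : strToNat u + (k + 1 + q.length) = n := by rw [hu]; omega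
    rw [hNn] at hv1 hv2 hv3
    obtain ⟨x, hxlen, hxval⟩ := exists_str n v0 hv1 hv2
    set prog : List Bool := List.replicate u.length false ++ true ::
      (u ++ (List.replicate k false ++ true :: q)) with hprog
    have hVeval : evalS V prog [] = Part.some v0 := by
      show V.eval (Nat.pair (strToNat prog) (strToNat [])) = _
      rw [hV, show strToNat [] = 0 from rfl]
      exact hev
    have hUeval : evalS U (w ++ prog) [] = Part.some v0 :=
      (hw prog [] (by rw [hVeval]; trivial)).trans hVeval
    have hout : outputs U (w ++ prog) [] x := by
      show strToNat x ∈ evalS U (w ++ prog) []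
      rw [hUeval, hxval]
      exact Part.mem_some_iff.2 rfl
    refine ⟨x, hxlen, ⟨w ++ prog, ?_, hout⟩, halttime U q, ?_, ?_⟩
    · rw [hprog]
      simp only [List.length_append, List.length_cons, List.length_replicate]
      omega
    · intro p h1 h2
      exact hqmax p (by omega) h2
    · intro p h1 h2
      by_contra hc
      push_neg at hc
      have hwithin := output_within (T := halttime U q) h2 (by omega)
      rw [hxval] at hwithin
      refine hv3 (strToNat p) ?_ hwithin
      have hb := strToNat_lt p
      have hple : (2:ℕ) ^ (p.length + 1) ≤ 2 ^ (n - 2) :=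
        Nat.pow_le_pow_right (by norm_num) (by omega)
      omega
  · -- degenerate case
    obtain ⟨v0, hv1, hv2, hv3, hev⟩ := gFun_eval_deg U u (n - d) (by omega) 0
    have hNn : strToNat u + (n - d) = n := by rw [hu]; omega
    rw [hNn] at hv1 hv2 hv3
    obtain ⟨x, hxlen, hxval⟩ := exists_str n v0 hv1 hv2
    set prog : List Bool := List.replicate u.length false ++ true ::
      (u ++ List.replicate (n - d) false) with hprog
    have hVeval : evalS V prog [] = Part.some v0 := by
      show V.eval (Nat.pair (strToNat prog) (strToNat [])) = _
      rw [hV, show strToNat [] = 0 from rfl]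
      exact hev
    have hUeval : evalS U (w ++ prog) [] = Part.some v0 :=
      (hw prog [] (by rw [hVeval]; trivial)).trans hVeval
    have hout : outputs U (w ++ prog) [] x := by
      show strToNat x ∈ evalS U (w ++ prog) []
      rw [hUeval, hxval]
      exact Part.mem_some_iff.2 rfl
    refine ⟨x, hxlen, ⟨w ++ prog, ?_, hout⟩, 0, ?_, ?_⟩
    · rw [hprog]
      simp only [List.length_append, List.length_cons, List.length_replicate]
      omega
    · intro p h1 h2
      exact absurd h2 (hnone p (by omega))
    · intro p h1 h2
      by_contra hc
      push_neg at hc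
      have hwithin := output_within (T := 0) h2 (by omega)
      rw [hxval] at hwithin
      refine hv3 (strToNat p) ?_ hwithin
      have hb := strToNat_lt p
      have hple : (2:ℕ) ^ (p.length + 1) ≤ 2 ^ (n - 2) :=
        Nat.pow_le_pow_right (by norm_num) (by omega)
      omega

end DepthAux


open DepthAux

theorem control_ldepth_and_C :
    ∀ U : Nat.Partrec.Code, Universal U →
    ∃ c : ℕ, ∃ D : ℕ, ∀ d : ℕ, D ≤ d → ∀ n : ℕ,
      ∃ x : List Bool, x.length = n ∧
        (n : ℤ) - d ≤ (Cpx U x : ℤ) ∧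
        (n : ℤ) - d ≤ (ldbb U (d - 2 * Nat.log 2 d - c) x : ℤ) := by

  intro U hU
  obtain ⟨V, hV⟩ := Nat.Partrec.Code.exists_code.1 (Partrec.nat_iff.1 (partrec_gFun U))
  obtain ⟨w, hw⟩ := hU V
  refine ⟨w.length + 6, 2 * (w.length + 6) + 16, ?_⟩
  intro d hd n
  by_cases hnd : n ≤ d
  · refine ⟨List.replicate n false, by simp, ?_, ?_⟩
    · have h1 : (0:ℤ) ≤ (Cpx U (List.replicate n false) : ℤ) := Int.natCast_nonneg _
      have h2 : (n:ℤ) ≤ (d:ℤ) := by exact_mod_cast hnd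
      omega
    · have h1 : (0:ℤ) ≤ (ldbb U (d - 2 * Nat.log 2 d - (w.length + 6))
        (List.replicate n false) : ℤ) := Int.natCast_nonneg _
      have h2 : (n:ℤ) ≤ (d:ℤ) := by exact_mod_cast hnd
      omega
  · push_neg at hnd
    -- arithmetic: 2 * log d + (w.length + 6) ≤ d
    have hlog : 2 * Nat.log 2 d + (w.length + 6) ≤ d := by
      have hL4 : 4 ≤ Nat.log 2 d := by
        have h16 : (2:ℕ) ^ 4 ≤ d := by norm_num; omega
        exact (Nat.le_log_iff_pow_le (by norm_num) (by omega)).2 h16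
      have hpow : 2 ^ Nat.log 2 d ≤ d := Nat.pow_log_le_self 2 (by omega)
      have h4L := four_mul_le_two_pow hL4
      omega
    obtain ⟨x, hxlen, ⟨p0, hp0len, hp0out⟩, T, hT1, hT2⟩ :=
      key U V hV w hw d n (by omega) (by omega)
    -- Kolmogorov complexity facts
    have hCmem : Cpx U x ∈ {m | ∃ p : List Bool, p.length = m ∧ outputs U p [] x} :=
      Nat.sInf_mem ⟨p0.length, p0, rfl, hp0out⟩
    obtain ⟨pm, hpmlen, hpmout⟩ := hCmem
    have hCle : Cpx U x ≤ p0.length :=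
      Nat.sInf_le ⟨p0, rfl, hp0out⟩
    -- claim A : n - d ≤ C(x)
    have hA : n - d ≤ Cpx U x := by
      by_contra hc
      push_neg at hc
      have hhalts : haltsOn U pm := Part.dom_iff_mem.2 ⟨_, hpmout⟩
      have h1 := hT1 pm (by omega) hhalts
      have h2 := hT2 pm (by omega) hpmout
      omega
    -- logical depth
    have hldmem : ld U (d - 2 * Nat.log 2 d - (w.length + 6)) x ∈
        {t | ∃ p : List Bool, p.length ≤ Cpx U x + (d - 2 * Nat.log 2 d - (w.length + 6)) ∧
          outputs U p [] x ∧ halttime U p = t} :=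
      Nat.sInf_mem ⟨halttime U pm, pm, by omega, hpmout, rfl⟩
    obtain ⟨pd, hpdlen, hpdout, hpdtime⟩ := hldmem
    have hpdb : pd.length + 3 ≤ n := by omega
    have hld : T + 1 ≤ ld U (d - 2 * Nat.log 2 d - (w.length + 6)) x := by
      have := hT2 pd hpdb hpdout
      omega
    -- busy beaver inverse
    have hbbmem : bbInv U (ld U (d - 2 * Nat.log 2 d - (w.length + 6)) x) ∈
        {k | ∃ p : List Bool, p.length = k ∧ haltsOn U p ∧
          ld U (d - 2 * Nat.log 2 d - (w.length + 6)) x ≤ halttime U p} :=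
      Nat.sInf_mem ⟨pd.length, pd, rfl, Part.dom_iff_mem.2 ⟨_, hpdout⟩, by omega⟩
    obtain ⟨pb, hpblen, hpbhalts, hpbtime⟩ := hbbmem
    have hB : n - d ≤ bbInv U (ld U (d - 2 * Nat.log 2 d - (w.length + 6)) x) := by
      by_contra hc
      push_neg at hc
      have := hT1 pb (by omega) hpbhalts
      omega
    refine ⟨x, hxlen, ?_, ?_⟩
    · omega
    · show (n : ℤ) - d ≤ ((bbInv U (ld U (d - 2 * Nat.log 2 d - (w.length + 6)) x) : ℕ) : ℤ)
      omega
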